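/- Let n ≥ k ≥ 1 be integers and ε_p ∈ [0,1). Let H and T be independent random variables where H takes values in {0,1,2,…} with P(H = x) = ε_p^x (1 − ε_p), and T is an integrable random variable taking values in {k, k+1, …, n}. Define Y = n(H + 1) and Q = n(n−1)H + nT(1+H) + n²H²/2 + n(n−2)/2. Then E(Q)/E(Y) = E(T) − 1 + n(1 + ε_p)/(2(1 − ε_p)). (This is the average-age formula Δ = E(T) − 1 + n(1+ε_p)/(2(1−ε_p)) obtained from the renewal-reward ratio E(Q)/E(Y), where H is the number of erased packets in a renewal interval, T the decoding delay of the successful packet, Y the interdeparture time, and ε_p the packet erasure probability.) -/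

import Mathlib

open MeasureTheory ProbabilityTheory

lemma hasSum_sq_mul_geometric {r : ℝ} (hr : |r| < 1) :
    HasSum (fun n : ℕ => (n : ℝ)^2 * r^n) (r * (1 + r) / (1 - r)^3) := by
  have hr1 : (1 : ℝ) - r ≠ 0 := by
    have : r < 1 := lt_of_le_of_lt (le_abs_self r) hr
    intro h; nlinarith
  have A := hasSum_choose_mul_geometric_of_norm_lt_one (𝕜 := ℝ) 2 (by simpa using hr)
  have B := hasSum_coe_mul_geometric_of_norm_lt_one (r := r) (by simpa using hr)
  have C := hasSum_geometric_of_norm_lt_one (ξ := r) (by simpa using hr)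
  have D := ((A.mul_left 2).sub (B.mul_left 3)).sub (C.mul_left 2)
  convert D using 1
  · rfl
  · funext n
    have h2 : ((n + 2).choose 2 : ℝ) = ((n:ℝ) + 2) * ((n:ℝ) + 1) / 2 := by
      rw [Nat.cast_choose_two]; push_cast; ring
    rw [h2]; ring
  · field_simp
    ring

lemma integral_of_geom {Ω : Type*} [MeasureSpace Ω] [IsProbabilityMeasure (volume : Measure Ω)]
    {εp : ℝ} (h0 : 0 ≤ εp) (h1 : εp < 1) {H : Ω → ℕ} (hH : Measurable H)
    (hHdist : ∀ x : ℕ, volume {ω | H ω = x} = ENNReal.ofReal (εp^x * (1 - εp)))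
    {f : ℕ → ℝ} (hfpos : ∀ x, 0 ≤ f x) {S : ℝ}
    (hsum : HasSum (fun x => εp^x * (1 - εp) * f x) S) :
    Integrable (fun ω => f (H ω)) ∧ ∫ ω, f (H ω) = S := by
  have hwpos : ∀ x : ℕ, 0 ≤ εp^x * (1 - εp) := fun x =>
    mul_nonneg (pow_nonneg h0 x) (by linarith)
  set ν : Measure ℕ := Measure.map H volume with hν
  have hνx : ∀ x : ℕ, ν {x} = ENNReal.ofReal (εp^x * (1 - εp)) := by
    intro x
    rw [hν, Measure.map_apply hH (MeasurableSet.singleton x)]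
    have : H ⁻¹' {x} = {ω | H ω = x} := rfl
    rw [this, hHdist x]
  have hfmeas : Measurable f := measurable_from_top
  have hlint : ∫⁻ x, ENNReal.ofReal (f x) ∂ν = ENNReal.ofReal S := by
    rw [lintegral_countable']
    have : ∀ x : ℕ, ENNReal.ofReal (f x) * ν {x}
        = ENNReal.ofReal (εp^x * (1 - εp) * f x) := by
      intro x
      rw [hνx x, ← ENNReal.ofReal_mul (hfpos x), mul_comm]
    rw [tsum_congr this, ← ENNReal.ofReal_tsum_of_nonneg
      (fun x => mul_nonneg (hwpos x) (hfpos x)) hsum.summable, hsum.tsum_eq]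
  have hfint : Integrable f ν := by
    refine ⟨hfmeas.aestronglyMeasurable, ?_⟩
    rw [hasFiniteIntegral_iff_ofReal (Filter.Eventually.of_forall hfpos), hlint]
    exact ENNReal.ofReal_lt_top
  have hint : Integrable (fun ω => f (H ω)) := by
    exact (integrable_map_measure (μ := (volume : Measure Ω)) hfmeas.aestronglyMeasurable
      hH.aemeasurable).mp hfint
  refine ⟨hint, ?_⟩
  rw [← integral_map hH.aemeasurable hfmeas.aestronglyMeasurable,
    integral_countable' hfint]
  have : ∀ x : ℕ, ν.real {x} • f x = εp^x * (1 - εp) * f x := by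
    intro x
    rw [measureReal_def, hνx x, ENNReal.toReal_ofReal (hwpos x), smul_eq_mul]
  rw [tsum_congr this, hsum.tsum_eq]

/-- The average-age formula `E(Q)/E(Y) = E(T) - 1 + n(1+ε_p)/(2(1-ε_p))`, where `H` is the
geometric number of erased packets before a success, `T ∈ {k,…,n}` is the decoding delay of
the successful packet (independent of `H`), `Y = n(H+1)` is the interdeparture time and
`Q = n(n-1)H + nT(1+H) + n²H²/2 + n(n-2)/2` is the age-area over a renewal interval. -/
theorem average_age_formula {Ω : Type*} [MeasureSpace Ω]
    [IsProbabilityMeasure (volume : Measure Ω)]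
    (n k : ℕ) (hk : 1 ≤ k) (hkn : k ≤ n) (εp : ℝ) (hεp : εp ∈ Set.Ico (0:ℝ) 1)
    (H T : Ω → ℕ) (hHmeas : Measurable H) (hTmeas : Measurable T)
    (hindep : IndepFun H T volume)
    (hHdist : ∀ x : ℕ, volume {ω | H ω = x} = ENNReal.ofReal (εp^x * (1 - εp)))
    (hTrange : ∀ ω, T ω ∈ Set.Icc k n)
    (hTint : Integrable (fun ω => (T ω : ℝ))) :
    (∫ ω, ((n : ℝ) * ((n : ℝ) - 1) * (H ω : ℝ) + (n : ℝ) * (T ω : ℝ) * (1 + (H ω : ℝ)) +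
        (n : ℝ)^2 * (H ω : ℝ)^2 / 2 + (n : ℝ) * ((n : ℝ) - 2) / 2)) /
      (∫ ω, ((n : ℝ) * ((H ω : ℝ) + 1))) =
    (∫ ω, (T ω : ℝ)) - 1 + (n : ℝ) * (1 + εp) / (2 * (1 - εp)) := by
  obtain ⟨h0, h1⟩ := hεp
  have hq : (0:ℝ) < 1 - εp := by linarith
  have habs : ‖εp‖ < 1 := by rw [Real.norm_eq_abs, abs_of_nonneg h0]; exact h1
  have hn1 : (1:ℝ) ≤ (n:ℝ) := by exact_mod_cast le_trans hk hkn
  have hn0 : (n:ℝ) ≠ 0 := by linarith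
  -- E[H]
  have hsumH : HasSum (fun x : ℕ => εp^x * (1 - εp) * (x:ℝ)) (εp / (1 - εp)) := by
    have B := (hasSum_coe_mul_geometric_of_norm_lt_one habs).mul_left (1 - εp)
    convert B using 1
    · rfl
    · funext x; ring
    · field_simp
  have hHgeo := integral_of_geom h0 h1 hHmeas hHdist (f := fun x => (x:ℝ))
    (fun x => Nat.cast_nonneg x) hsumH
  have hHint : Integrable (fun ω => (H ω : ℝ)) := hHgeo.1
  have hHval : ∫ ω, (H ω : ℝ) = εp / (1 - εp) := hHgeo.2
  -- E[H²]
  have hsumH2 : HasSum (fun x : ℕ => εp^x * (1 - εp) * ((x:ℝ)^2))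
      (εp * (1 + εp) / (1 - εp)^2) := by
    have B := (hasSum_sq_mul_geometric (by rwa [Real.norm_eq_abs] at habs)).mul_left (1 - εp)
    convert B using 1
    · rfl
    · funext x; ring
    · field_simp
  have hH2geo := integral_of_geom h0 h1 hHmeas hHdist (f := fun x => (x:ℝ)^2)
    (fun x => sq_nonneg _) hsumH2
  have hH2int : Integrable (fun ω => (H ω : ℝ)^2) := hH2geo.1
  have hH2val : ∫ ω, (H ω : ℝ)^2 = εp * (1 + εp) / (1 - εp)^2 := hH2geo.2
  -- product term
  have hcast : Measurable (fun x : ℕ => (x:ℝ)) := measurable_from_top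
  have hcast2 : Measurable (fun x : ℕ => 1 + (x:ℝ)) := measurable_from_top
  have hindepR : IndepFun (fun ω => (T ω : ℝ)) (fun ω => 1 + (H ω : ℝ)) volume :=
    hindep.symm.comp hcast hcast2
  have h1H : Integrable (fun ω => 1 + (H ω : ℝ)) := (integrable_const 1).add hHint
  have hTHint : Integrable (fun ω => (T ω : ℝ) * (1 + (H ω : ℝ))) :=
    hindepR.integrable_mul hTint h1H
  have hTHval : ∫ ω, (T ω : ℝ) * (1 + (H ω : ℝ))
      = (∫ ω, (T ω : ℝ)) * (1 + εp / (1 - εp)) := by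
    have h := hindepR.integral_mul_eq_mul_integral hTint.aestronglyMeasurable h1H.aestronglyMeasurable
    have h2 : ∫ ω, (1 + (H ω : ℝ)) = 1 + εp / (1 - εp) := by
      rw [integral_add (integrable_const 1) hHint, hHval]
      simp [measure_univ]
    calc ∫ ω, (T ω : ℝ) * (1 + (H ω : ℝ)) = (∫ ω, (T ω : ℝ)) * ∫ ω, (1 + (H ω : ℝ)) := h
      _ = (∫ ω, (T ω : ℝ)) * (1 + εp / (1 - εp)) := by rw [h2]
  -- split the numerator
  have hfun : (fun ω => (n : ℝ) * ((n : ℝ) - 1) * (H ω : ℝ) + (n : ℝ) * (T ω : ℝ) *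
        (1 + (H ω : ℝ)) + (n : ℝ)^2 * (H ω : ℝ)^2 / 2 + (n : ℝ) * ((n : ℝ) - 2) / 2)
      = (fun ω => (((n : ℝ) * ((n : ℝ) - 1)) * (H ω : ℝ) + (n : ℝ) *
        ((T ω : ℝ) * (1 + (H ω : ℝ))) + ((n : ℝ)^2 / 2) * (H ω : ℝ)^2) +
        (n : ℝ) * ((n : ℝ) - 2) / 2) := funext fun ω => by ring
  have I1 : Integrable (fun ω => ((n : ℝ) * ((n : ℝ) - 1)) * (H ω : ℝ)) := hHint.const_mul _
  have I2 : Integrable (fun ω => (n : ℝ) * ((T ω : ℝ) * (1 + (H ω : ℝ)))) := hTHint.const_mul _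
  have I3 : Integrable (fun ω => ((n : ℝ)^2 / 2) * (H ω : ℝ)^2) := hH2int.const_mul _
  have hnum : (∫ ω, ((n : ℝ) * ((n : ℝ) - 1) * (H ω : ℝ) + (n : ℝ) * (T ω : ℝ) *
        (1 + (H ω : ℝ)) + (n : ℝ)^2 * (H ω : ℝ)^2 / 2 + (n : ℝ) * ((n : ℝ) - 2) / 2))
      = ((n : ℝ) * ((n : ℝ) - 1)) * (εp / (1 - εp)) + (n : ℝ) * ((∫ ω, (T ω : ℝ)) *
        (1 + εp / (1 - εp))) + ((n : ℝ)^2 / 2) * (εp * (1 + εp) / (1 - εp)^2) +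
        (n : ℝ) * ((n : ℝ) - 2) / 2 := by
    have e1 : ∫ ω, (((n : ℝ) * ((n : ℝ) - 1)) * (H ω : ℝ) + (n : ℝ) *
          ((T ω : ℝ) * (1 + (H ω : ℝ)))) = (∫ ω, ((n : ℝ) * ((n : ℝ) - 1)) * (H ω : ℝ)) +
          ∫ ω, (n : ℝ) * ((T ω : ℝ) * (1 + (H ω : ℝ))) := integral_add I1 I2
    have e2 : ∫ ω, (((n : ℝ) * ((n : ℝ) - 1)) * (H ω : ℝ) + (n : ℝ) *
          ((T ω : ℝ) * (1 + (H ω : ℝ))) + ((n : ℝ)^2 / 2) * (H ω : ℝ)^2)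
        = (∫ ω, (((n : ℝ) * ((n : ℝ) - 1)) * (H ω : ℝ) + (n : ℝ) *
          ((T ω : ℝ) * (1 + (H ω : ℝ))))) + ∫ ω, ((n : ℝ)^2 / 2) * (H ω : ℝ)^2 :=
      integral_add (I1.add I2) I3
    have e3 : ∫ ω, (((n : ℝ) * ((n : ℝ) - 1)) * (H ω : ℝ) + (n : ℝ) *
          ((T ω : ℝ) * (1 + (H ω : ℝ))) + ((n : ℝ)^2 / 2) * (H ω : ℝ)^2 +
          (n : ℝ) * ((n : ℝ) - 2) / 2)
        = (∫ ω, (((n : ℝ) * ((n : ℝ) - 1)) * (H ω : ℝ) + (n : ℝ) *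
          ((T ω : ℝ) * (1 + (H ω : ℝ))) + ((n : ℝ)^2 / 2) * (H ω : ℝ)^2)) +
          ∫ ω, ((n : ℝ) * ((n : ℝ) - 2) / 2 : ℝ) :=
      integral_add ((I1.add I2).add I3) (integrable_const _)
    rw [hfun, e3, e2, e1, integral_const_mul, integral_const_mul, integral_const_mul,
      hHval, hH2val, hTHval]
    simp [measure_univ]
  have hden : (∫ ω, ((n : ℝ) * ((H ω : ℝ) + 1))) = (n : ℝ) * (εp / (1 - εp) + 1) := by
    rw [integral_const_mul, integral_add hHint (integrable_const 1), hHval]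
    simp [measure_univ]
  rw [hnum, hden]
  have hden0 : εp / (1 - εp) + 1 ≠ 0 := by
    have : εp / (1 - εp) ≥ 0 := div_nonneg h0 hq.le
    linarith
  field_simp
  ring
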